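/- Let G be a finite group, p a prime dividing |G|, and P a Sylow p-subgroup of G. If G = ⟨ N_G(Y) : Y a nontrivial subgroup of P ⟩, then the commuting graph Γ_p on the set of elements of G of order p is connected. -/

import Mathlib

open SimpleGraph

/-- The commuting graph on a subset `X` of a group `G`: vertices are the elements of `X`,
and two distinct vertices are adjacent iff they commute. -/
def commGraph {G : Type*} [Group G] (X : Set G) : SimpleGraph X where
  Adj a b := a ≠ b ∧ (a : G) * (b : G) = (b : G) * (a : G)
  symm := ⟨fun a b h => ⟨h.1.symm, h.2.symm⟩⟩
  loopless := ⟨fun a h => h.1 rfl⟩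

/-- The connected component of `x` in the commuting graph on `X`, viewed as a subset of `G`. -/
def compSet {G : Type*} [Group G] (X : Set G) (x : G) (hx : x ∈ X) : Set G :=
  {y : G | ∃ hy : y ∈ X, (commGraph X).Reachable ⟨x, hx⟩ ⟨y, hy⟩}

/-- The stabilizer `H_x` in `G` of the connected component of `x` in the commuting graph on `X`,
under the conjugation action. -/
def conjStab {G : Type*} [Group G] (X : Set G) (x : G) (hx : x ∈ X) : Set G :=
  {g : G | (fun y => g⁻¹ * y * g) '' compSet X x hx = compSet X x hx}

open Pointwise

section Aux
variable {G : Type*} [Group G] {p : ℕ}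

lemma aux_memX (g : G) {a : G} (ha : a ∈ {x : G | orderOf x = p}) :
    g⁻¹ * a * g ∈ {x : G | orderOf x = p} := by
  have h : g⁻¹ * a * g = (MulAut.conj g⁻¹) a := by simp [MulAut.conj_apply]
  simp only [Set.mem_setOf_eq] at ha ⊢
  rw [h]
  rw [show ((MulAut.conj g⁻¹) a) = (MulAut.conj g⁻¹).toMonoidHom a from rfl]
  rw [orderOf_injective (MulAut.conj g⁻¹).toMonoidHom (MulAut.conj g⁻¹).injective a, ha]

lemma aux_reach (g : G) {a b : G} (ha : a ∈ {x : G | orderOf x = p})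
    (hb : b ∈ {x : G | orderOf x = p})
    (h : (commGraph {x : G | orderOf x = p}).Reachable ⟨a, ha⟩ ⟨b, hb⟩) :
    (commGraph {x : G | orderOf x = p}).Reachable
      ⟨g⁻¹ * a * g, aux_memX g ha⟩ ⟨g⁻¹ * b * g, aux_memX g hb⟩ := by
  let f : commGraph {x : G | orderOf x = p} →g commGraph {x : G | orderOf x = p} :=
    { toFun := fun y => ⟨g⁻¹ * (y : G) * g, aux_memX g y.2⟩
      map_rel' := by
        rintro x y ⟨hne, hcomm⟩
        refine ⟨fun hEq => hne ?_, ?_⟩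
        · apply Subtype.ext
          have := congrArg Subtype.val hEq
          simp only at this
          exact mul_left_cancel (mul_right_cancel this)
        · show g⁻¹ * x * g * (g⁻¹ * y * g) = g⁻¹ * y * g * (g⁻¹ * x * g)
          have key : ∀ u v : G, g⁻¹ * u * g * (g⁻¹ * v * g) = g⁻¹ * (u * v) * g := by
            intros; group
          rw [key, key, hcomm] }
  exact h.map f

lemma aux_reach' (g : G) {a b c d : G} (ha : a ∈ {x : G | orderOf x = p})
    (hb : b ∈ {x : G | orderOf x = p}) (hc : c ∈ {x : G | orderOf x = p})
    (hd : d ∈ {x : G | orderOf x = p})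
    (h : (commGraph {x : G | orderOf x = p}).Reachable ⟨a, ha⟩ ⟨b, hb⟩)
    (h1 : c = g⁻¹ * a * g) (h2 : d = g⁻¹ * b * g) :
    (commGraph {x : G | orderOf x = p}).Reachable ⟨c, hc⟩ ⟨d, hd⟩ := by
  have := aux_reach g ha hb h
  have e1 : (⟨c, hc⟩ : {x : G | orderOf x = p}) = ⟨g⁻¹ * a * g, aux_memX g ha⟩ :=
    Subtype.ext h1
  have e2 : (⟨d, hd⟩ : {x : G | orderOf x = p}) = ⟨g⁻¹ * b * g, aux_memX g hb⟩ :=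
    Subtype.ext h2
  rw [e1, e2]; exact this

lemma aux_reach_of_comm {a b : G} (ha : a ∈ {x : G | orderOf x = p})
    (hb : b ∈ {x : G | orderOf x = p}) (h : a * b = b * a) :
    (commGraph {x : G | orderOf x = p}).Reachable ⟨a, ha⟩ ⟨b, hb⟩ := by
  by_cases hab : a = b
  · subst hab; exact Reachable.refl _
  · exact Adj.reachable ⟨fun hEq => hab (congrArg Subtype.val hEq), h⟩

lemma aux_exists_orderOf_eq_prime [Finite G] (hp : p.Prime) {Y : Subgroup G}
    (hY : IsPGroup p Y) (hne : Y ≠ ⊥) : ∃ y ∈ Y, orderOf y = p := by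
  haveI := Fact.mk hp
  haveI : Nontrivial Y := Y.nontrivial_iff_ne_bot.2 hne
  obtain ⟨n, hn⟩ := IsPGroup.iff_card.mp hY
  have hn0 : n ≠ 0 := by
    rintro rfl
    rw [pow_zero] at hn
    exact (Finite.one_lt_card_iff_nontrivial.2 ‹Nontrivial Y›).ne' hn
  obtain ⟨y, hy⟩ := exists_prime_orderOf_dvd_card' (G := Y) p (hn ▸ dvd_pow_self p hn0)
  exact ⟨y, y.2, ((orderOf_injective Y.subtype Subtype.coe_injective y).trans hy)⟩

end Aux

/-- Let `G` be a finite group, `p` a prime dividing `|G|`, and `P` a Sylow `p`-subgroup.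
If `G` is generated by the normalizers of the nontrivial subgroups of `P`, then the
commuting graph on the set of elements of `G` of order `p` is connected. -/
theorem commGraph_connected_of_normalizers_generate
    {G : Type*} [Group G] [Finite G] (p : ℕ) (hp : p.Prime)
    (hdvd : p ∣ Nat.card G) (P : Sylow p G)
    (hgen : (⨆ Y ∈ {Y : Subgroup G | Y ≠ ⊥ ∧ Y ≤ (P : Subgroup G)}, Subgroup.normalizer (Y : Set G)) = ⊤) :
    (commGraph {x : G | orderOf x = p}).Connected := by
  haveI := Fact.mk hp
  -- p divides the cardinality of P
  have hcardP : p ∣ Nat.card ↥(P : Subgroup G) := by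
    rw [Sylow.card_eq_multiplicity]
    exact dvd_pow_self p (hp.factorization_pos_of_dvd (Nat.card_pos).ne' hdvd).ne'
  haveI : Nontrivial ↥(P : Subgroup G) :=
    Finite.one_lt_card_iff_nontrivial.1
      (lt_of_lt_of_le hp.one_lt (Nat.le_of_dvd Nat.card_pos hcardP))
  -- z : element of order p in the center of P
  have hZ : IsPGroup p ↥(Subgroup.center ↥(P : Subgroup G)) :=
    IsPGroup.to_subgroup P.2 _
  have hZne : Subgroup.center ↥(P : Subgroup G) ≠ ⊥ :=
    (Subgroup.nontrivial_iff_ne_bot _).1 (P.2.center_nontrivial)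
  obtain ⟨z₁, hz₁mem, hz₁ord⟩ := aux_exists_orderOf_eq_prime hp hZ hZne
  set z : G := (z₁ : G) with hzdef
  have hz : z ∈ {x : G | orderOf x = p} :=
    (orderOf_injective (P : Subgroup G).subtype Subtype.coe_injective z₁).trans hz₁ord
  have hcomm : ∀ y ∈ (P : Subgroup G), y * z = z * y := by
    intro y hy
    have h := (Subgroup.mem_center_iff.mp hz₁mem) ⟨y, hy⟩
    exact congrArg Subtype.val h
  -- the stabilizing subgroup
  let S : Set G := {g : G |
    (commGraph {x : G | orderOf x = p}).Reachable ⟨z, hz⟩ ⟨g⁻¹ * z * g, aux_memX g hz⟩}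
  have hSone : (1 : G) ∈ S := by
    show (commGraph _).Reachable _ _
    have e : (⟨(1:G)⁻¹ * z * 1, aux_memX 1 hz⟩ : {x : G | orderOf x = p}) = ⟨z, hz⟩ :=
      Subtype.ext (by group)
    rw [e]
  have hSmul : ∀ {g h : G}, g ∈ S → h ∈ S → g * h ∈ S := by
    intro g h hg hh
    have r := aux_reach' h hz (aux_memX g hz) (aux_memX h hz) (aux_memX (g * h) hz)
      hg rfl (by group)
    exact hh.trans r
  have hSinv : ∀ {g : G}, g ∈ S → g⁻¹ ∈ S := by
    intro g hg
    have r := aux_reach' g⁻¹ hz (aux_memX g hz) (aux_memX g⁻¹ hz) hz hg rfl (by group)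
    exact r.symm
  let H : Subgroup G :=
    { carrier := S
      one_mem' := hSone
      mul_mem' := hSmul
      inv_mem' := hSinv }
  -- H contains all normalizers of nontrivial subgroups of P
  have hle : (⨆ Y ∈ {Y : Subgroup G | Y ≠ ⊥ ∧ Y ≤ (P : Subgroup G)}, Subgroup.normalizer (Y : Set G)) ≤ H := by
    refine iSup_le fun Y => iSup_le fun hY => ?_
    intro g hg
    obtain ⟨y, hyY, hyp⟩ := aux_exists_orderOf_eq_prime hp (P.2.to_le hY.2) hY.1
    have hy' : g⁻¹ * y * g ∈ Y := by
      have h2 := (Subgroup.mem_normalizer_iff.mp (inv_mem hg) y).mp hyY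
      simpa using h2
    have r1 : (commGraph {x : G | orderOf x = p}).Reachable ⟨z, hz⟩ ⟨y, hyp⟩ :=
      aux_reach_of_comm hz hyp (hcomm y (hY.2 hyY)).symm
    have r2 := aux_reach g hz hyp r1
    have r3 : (commGraph {x : G | orderOf x = p}).Reachable ⟨z, hz⟩
        ⟨g⁻¹ * y * g, aux_memX g hyp⟩ :=
      aux_reach_of_comm hz (aux_memX g hyp) (hcomm _ (hY.2 hy')).symm
    exact (r3.trans r2.symm : g ∈ S)
  have hTop : ∀ g : G, g ∈ H := by
    rw [hgen] at hle
    exact fun g => hle trivial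
  -- every vertex is reachable from z
  have reachz : ∀ w : {x : G | orderOf x = p},
      (commGraph {x : G | orderOf x = p}).Reachable ⟨z, hz⟩ w := by
    rintro ⟨w, hw⟩
    have hpg : IsPGroup p (Subgroup.zpowers w) :=
      IsPGroup.of_card (n := 1) (by rw [Nat.card_zpowers, pow_one]; exact hw)
    obtain ⟨Q, hQ⟩ := hpg.exists_le_sylow
    obtain ⟨g, hg⟩ := MulAction.exists_smul_eq G Q P
    have hu : g * w * g⁻¹ ∈ (P : Subgroup G) := by
      have h1 : MulAut.conj g • w ∈ MulAut.conj g • (Q : Subgroup G) :=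
        Subgroup.smul_mem_pointwise_smul _ _ _ (hQ (Subgroup.mem_zpowers w))
      rw [← Sylow.coe_subgroup_smul, hg] at h1
      simpa [MulAut.smul_def, MulAut.conj_apply] using h1
    have hu_ord : g * w * g⁻¹ ∈ {x : G | orderOf x = p} := by
      have := aux_memX (p := p) g⁻¹ hw
      simpa using this
    have r1 : (commGraph {x : G | orderOf x = p}).Reachable ⟨z, hz⟩
        ⟨g * w * g⁻¹, hu_ord⟩ :=
      aux_reach_of_comm hz hu_ord (hcomm _ hu).symm
    have r2 := aux_reach' g hz hu_ord (aux_memX g hz) hw r1 rfl (by group)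
    have hzg : (commGraph {x : G | orderOf x = p}).Reachable ⟨z, hz⟩
        ⟨g⁻¹ * z * g, aux_memX g hz⟩ := hTop g
    exact hzg.trans r2
  rw [SimpleGraph.connected_iff]
  exact ⟨fun a b => (reachz a).symm.trans (reachz b), ⟨⟨z, hz⟩⟩⟩
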